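/- Let U and A be Hopf ∗-algebras over ℂ with antipodes S, and let ⟨·,·⟩ be a duality pairing of Hopf ∗-algebras between U and A; define the left action of U on A by a.φ = Σ φ₍₁₎ ⟨a, φ₍₂₎⟩. Let 𝒥 ⊆ U be a left ideal of U satisfying S(𝒥)^∗ ⊆ 𝒥, where S(𝒥)^∗ = { S(x)^∗ : x ∈ 𝒥 }. Then the invariant subspace A^𝒥 = { φ ∈ A : x.φ = 0 for all x ∈ 𝒥 } is closed under the ∗-operation of A: if φ ∈ A^𝒥 then φ^∗ ∈ A^𝒥. (This is the claim that under condition (2.6) the subalgebra A_q(G/K) is a ∗-subalgebra of A_q(G).) -/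

import Mathlib

open TensorProduct

noncomputable section

variable {U A : Type*} [Ring U] [Ring A] [HopfAlgebra ℂ U] [HopfAlgebra ℂ A]
  [StarRing U] [StarModule ℂ U] [StarRing A] [StarModule ℂ A]

/-- The extension of a bilinear pairing `⟨·,·⟩ : U × A → ℂ` to tensor squares:
`⟨a ⊗ b, φ ⊗ ψ⟩ = ⟨a, φ⟩ ⟨b, ψ⟩`. -/
def pairTensor (p : U →ₗ[ℂ] Module.Dual ℂ A) :
    U ⊗[ℂ] U →ₗ[ℂ] Module.Dual ℂ (A ⊗[ℂ] A) :=
  (TensorProduct.dualDistrib ℂ A A).comp (TensorProduct.map p p)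

/-- The left action of `U` on `A` induced by a pairing `p`, as a linear map on the tensor
product: `a ⊗ φ ↦ a.φ = Σ φ₍₁₎ ⟨a, φ₍₂₎⟩`. -/
def actM (p : U →ₗ[ℂ] Module.Dual ℂ A) : U ⊗[ℂ] A →ₗ[ℂ] A :=
  (TensorProduct.rid ℂ A).toLinearMap
    ∘ₗ LinearMap.lTensor A (TensorProduct.lift p)
    ∘ₗ (TensorProduct.leftComm ℂ U A A).toLinearMap
    ∘ₗ LinearMap.lTensor U (Coalgebra.comul (R := ℂ) (A := A))

namespace HopfStarAux
open Coalgebra HopfAlgebra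

variable {B : Type*} [Ring B] [HopfAlgebra ℂ B]

/-- Convolution product on `B →ₗ[ℂ] B`. -/
def conv (f g : B →ₗ[ℂ] B) : B →ₗ[ℂ] B :=
  LinearMap.mul' ℂ B ∘ₗ TensorProduct.map f g ∘ₗ Coalgebra.comul (R := ℂ)

/-- Unit for convolution. -/
def cunit : B →ₗ[ℂ] B := Algebra.linearMap ℂ B ∘ₗ Coalgebra.counit (R := ℂ)

lemma cunit_apply (a : B) : cunit a = algebraMap ℂ B (Coalgebra.counit (R := ℂ) a) := rfl

lemma conv_apply_repr (f g : B →ₗ[ℂ] B) {a : B} {ι : Type*} (r : Coalgebra.Repr ℂ a ι) :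
    conv f g a = ∑ i ∈ r.index, f (r.left i) * g (r.right i) := by
  simp only [conv, LinearMap.comp_apply, ← r.eq, map_sum, TensorProduct.map_tmul,
    LinearMap.mul'_apply]

lemma conv_assoc (f g h : B →ₗ[ℂ] B) : conv (conv f g) h = conv f (conv g h) := by
  set M := LinearMap.mul' ℂ B
  have h1 : conv (conv f g) h =
      (M ∘ₗ TensorProduct.map (M ∘ₗ TensorProduct.map f g) h) ∘ₗ
        LinearMap.rTensor B (Coalgebra.comul (R := ℂ)) ∘ₗ Coalgebra.comul (R := ℂ) := by
    simp only [conv]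
    rw [show (M ∘ₗ TensorProduct.map f g ∘ₗ Coalgebra.comul (R := ℂ) : B →ₗ[ℂ] B) =
      (M ∘ₗ TensorProduct.map f g) ∘ₗ Coalgebra.comul (R := ℂ) from rfl]
    rw [show h = h ∘ₗ LinearMap.id from rfl]
    rw [TensorProduct.map_comp]
    rfl
  have h2 : conv f (conv g h) =
      (M ∘ₗ TensorProduct.map f (M ∘ₗ TensorProduct.map g h)) ∘ₗ
        LinearMap.lTensor B (Coalgebra.comul (R := ℂ)) ∘ₗ Coalgebra.comul (R := ℂ) := by
    simp only [conv]
    rw [show (M ∘ₗ TensorProduct.map g h ∘ₗ Coalgebra.comul (R := ℂ) : B →ₗ[ℂ] B) =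
      (M ∘ₗ TensorProduct.map g h) ∘ₗ Coalgebra.comul (R := ℂ) from rfl]
    conv_lhs => rw [show f = f ∘ₗ LinearMap.id from rfl]
    rw [TensorProduct.map_comp]
    rfl
  have h3 : (M ∘ₗ TensorProduct.map f (M ∘ₗ TensorProduct.map g h)) ∘ₗ
      (TensorProduct.assoc ℂ B B B).toLinearMap
      = M ∘ₗ TensorProduct.map (M ∘ₗ TensorProduct.map f g) h := by
    apply TensorProduct.ext_threefold
    intro x y z
    simp [M, mul_assoc]
  rw [h1, h2]
  have h4 := Coalgebra.coassoc (R := ℂ) (A := B)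
  calc (M ∘ₗ TensorProduct.map (M ∘ₗ TensorProduct.map f g) h) ∘ₗ
        LinearMap.rTensor B (Coalgebra.comul (R := ℂ)) ∘ₗ Coalgebra.comul (R := ℂ)
      = ((M ∘ₗ TensorProduct.map f (M ∘ₗ TensorProduct.map g h)) ∘ₗ
          (TensorProduct.assoc ℂ B B B).toLinearMap) ∘ₗ
        LinearMap.rTensor B (Coalgebra.comul (R := ℂ)) ∘ₗ Coalgebra.comul (R := ℂ) := by rw [h3]
    _ = (M ∘ₗ TensorProduct.map f (M ∘ₗ TensorProduct.map g h)) ∘ₗ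
        ((TensorProduct.assoc ℂ B B B).toLinearMap ∘ₗ
          LinearMap.rTensor B (Coalgebra.comul (R := ℂ)) ∘ₗ Coalgebra.comul (R := ℂ)) := by
        simp only [LinearMap.comp_assoc]
    _ = _ := by rw [h4]

lemma sum_counit_smul_right {a : B} {ι : Type*} (r : Coalgebra.Repr ℂ a ι) :
    ∑ i ∈ r.index, Coalgebra.counit (R := ℂ) (r.left i) • r.right i = a := by
  have h := Coalgebra.sum_counit_tmul_eq (R := ℂ) r
  calc ∑ i ∈ r.index, Coalgebra.counit (R := ℂ) (r.left i) • r.right i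
      = TensorProduct.lid ℂ B (∑ i ∈ r.index,
          Coalgebra.counit (R := ℂ) (r.left i) ⊗ₜ[ℂ] r.right i) := by
        rw [map_sum]; simp
    _ = TensorProduct.lid ℂ B ((1 : ℂ) ⊗ₜ[ℂ] a) := by rw [h]
    _ = a := by simp

lemma sum_counit_smul_left {a : B} {ι : Type*} (r : Coalgebra.Repr ℂ a ι) :
    ∑ i ∈ r.index, Coalgebra.counit (R := ℂ) (r.right i) • r.left i = a := by
  have h := Coalgebra.sum_tmul_counit_eq (R := ℂ) r
  calc ∑ i ∈ r.index, Coalgebra.counit (R := ℂ) (r.right i) • r.left i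
      = TensorProduct.rid ℂ B (∑ i ∈ r.index,
          r.left i ⊗ₜ[ℂ] Coalgebra.counit (R := ℂ) (r.right i)) := by
        rw [map_sum]; simp
    _ = TensorProduct.rid ℂ B (a ⊗ₜ[ℂ] (1 : ℂ)) := by rw [h]
    _ = a := by simp

lemma conv_cunit_left (f : B →ₗ[ℂ] B) : conv cunit f = f := by
  ext a
  set r := Coalgebra.Repr.arbitrary ℂ a
  rw [conv_apply_repr cunit f r]
  calc ∑ i ∈ r.index, cunit (r.left i) * f (r.right i)
      = ∑ i ∈ r.index, Coalgebra.counit (R := ℂ) (r.left i) • f (r.right i) := by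
        simp [cunit_apply, Algebra.smul_def]
    _ = f (∑ i ∈ r.index, Coalgebra.counit (R := ℂ) (r.left i) • r.right i) := by
        rw [map_sum]; simp only [map_smul]
    _ = f a := by rw [sum_counit_smul_right r]

lemma conv_cunit_right (f : B →ₗ[ℂ] B) : conv f cunit = f := by
  ext a
  set r := Coalgebra.Repr.arbitrary ℂ a
  rw [conv_apply_repr f cunit r]
  calc ∑ i ∈ r.index, f (r.left i) * cunit (r.right i)
      = ∑ i ∈ r.index, Coalgebra.counit (R := ℂ) (r.right i) • f (r.left i) := by
        simp only [cunit_apply]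
        refine Finset.sum_congr rfl fun i _ => ?_
        rw [← Algebra.commutes, Algebra.smul_def]
    _ = f (∑ i ∈ r.index, Coalgebra.counit (R := ℂ) (r.right i) • r.left i) := by
        rw [map_sum]; simp only [map_smul]
    _ = f a := by rw [sum_counit_smul_left r]

lemma conv_id_antipode : conv LinearMap.id (antipode (R := ℂ) (A := B)) = cunit := by
  ext a
  rw [conv_apply_repr _ _ (Coalgebra.Repr.arbitrary ℂ a)]
  simp only [LinearMap.id_coe, id_eq]
  rw [sum_mul_antipode_eq_algebraMap_counit (Coalgebra.Repr.arbitrary ℂ a)]; rfl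

lemma conv_antipode_id : conv (antipode (R := ℂ) (A := B)) LinearMap.id = cunit := by
  ext a
  rw [conv_apply_repr _ _ (Coalgebra.Repr.arbitrary ℂ a)]
  simp only [LinearMap.id_coe, id_eq]
  rw [sum_antipode_mul_eq_algebraMap_counit (Coalgebra.Repr.arbitrary ℂ a)]; rfl

lemma antipode_one' : antipode (R := ℂ) (1 : B) = 1 := by
  have h := mul_antipode_rTensor_comul_apply (R := ℂ) (A := B) 1
  simpa [Bialgebra.comul_one, Bialgebra.counit_one, Algebra.TensorProduct.one_def] using h


lemma claimA {x y : B} {ι κ : Type*} (rx : Coalgebra.Repr ℂ x ι) (ry : Coalgebra.Repr ℂ y κ) :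
    ∑ k ∈ rx.index, ∑ l ∈ ry.index,
      (rx.left k * ry.left l) *
        (antipode (R := ℂ) (ry.right l) * antipode (R := ℂ) (rx.right k))
      = (Coalgebra.counit (R := ℂ) x * Coalgebra.counit (R := ℂ) y) • (1 : B) := by
  have hy := sum_mul_antipode_eq_smul (R := ℂ) ry
  have hx := sum_mul_antipode_eq_smul (R := ℂ) rx
  calc ∑ k ∈ rx.index, ∑ l ∈ ry.index,
      (rx.left k * ry.left l) *
        (antipode (R := ℂ) (ry.right l) * antipode (R := ℂ) (rx.right k))
      = ∑ k ∈ rx.index, rx.left k *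
          ((∑ l ∈ ry.index, ry.left l * antipode (R := ℂ) (ry.right l)) *
            antipode (R := ℂ) (rx.right k)) := by
        refine Finset.sum_congr rfl fun k _ => ?_
        rw [Finset.sum_mul, Finset.mul_sum]
        exact Finset.sum_congr rfl fun l _ => by simp only [mul_assoc]
    _ = ∑ k ∈ rx.index, rx.left k *
          ((Coalgebra.counit (R := ℂ) y • (1 : B)) * antipode (R := ℂ) (rx.right k)) := by
        rw [hy]
    _ = Coalgebra.counit (R := ℂ) y •
          ∑ k ∈ rx.index, rx.left k * antipode (R := ℂ) (rx.right k) := by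
        rw [Finset.smul_sum]
        exact Finset.sum_congr rfl fun k _ => by
          rw [smul_mul_assoc, one_mul, mul_smul_comm]
    _ = Coalgebra.counit (R := ℂ) y • (Coalgebra.counit (R := ℂ) x • (1 : B)) := by rw [hx]
    _ = (Coalgebra.counit (R := ℂ) x * Coalgebra.counit (R := ℂ) y) • (1 : B) := by
        rw [smul_smul, mul_comm]

lemma claimC {x y : B} {ι κ : Type*} (rx : Coalgebra.Repr ℂ x ι) (ry : Coalgebra.Repr ℂ y κ) :
    ∑ k ∈ rx.index, ∑ l ∈ ry.index,
      antipode (R := ℂ) (rx.left k * ry.left l) * (rx.right k * ry.right l)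
      = (Coalgebra.counit (R := ℂ) x * Coalgebra.counit (R := ℂ) y) • (1 : B) := by
  let r : Coalgebra.Repr ℂ (x * y) (ι × κ) := {
    index := rx.index ×ˢ ry.index
    left := fun p => rx.left p.1 * ry.left p.2
    right := fun p => rx.right p.1 * ry.right p.2
    eq := by
      rw [Bialgebra.comul_mul, ← rx.eq, ← ry.eq, Finset.sum_mul_sum, Finset.sum_product]
      exact Finset.sum_congr rfl fun k _ => Finset.sum_congr rfl fun l _ => by
        rw [Algebra.TensorProduct.tmul_mul_tmul] }
  have h := sum_antipode_mul_eq_smul (R := ℂ) r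
  rw [Finset.sum_product] at h
  simpa [Bialgebra.counit_mul] using h

lemma claimC' {x y : B} {ι κ : Type*} (rx : Coalgebra.Repr ℂ x ι) (ry : Coalgebra.Repr ℂ y κ) (C : B) :
    ∑ l ∈ ry.index, ∑ k ∈ rx.index,
      antipode (R := ℂ) (rx.left k * ry.left l) * ((rx.right k * ry.right l) * C)
      = (Coalgebra.counit (R := ℂ) x * Coalgebra.counit (R := ℂ) y) • C := by
  calc ∑ l ∈ ry.index, ∑ k ∈ rx.index,
        antipode (R := ℂ) (rx.left k * ry.left l) * ((rx.right k * ry.right l) * C)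
      = ∑ l ∈ ry.index, (∑ k ∈ rx.index,
          antipode (R := ℂ) (rx.left k * ry.left l) * (rx.right k * ry.right l)) * C := by
        refine Finset.sum_congr rfl fun l _ => ?_
        rw [Finset.sum_mul]
        exact Finset.sum_congr rfl fun k _ => (mul_assoc _ _ _).symm
    _ = (∑ l ∈ ry.index, ∑ k ∈ rx.index,
          antipode (R := ℂ) (rx.left k * ry.left l) * (rx.right k * ry.right l)) * C := by
        rw [Finset.sum_mul]
    _ = ((Coalgebra.counit (R := ℂ) x * Coalgebra.counit (R := ℂ) y) • (1 : B)) * C := by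
        rw [Finset.sum_comm, claimC rx ry]
    _ = (Coalgebra.counit (R := ℂ) x * Coalgebra.counit (R := ℂ) y) • C := by
        rw [smul_mul_assoc, one_mul]

/-- `S y * S x` as a linear map on the tensor square. -/
def convG : B ⊗[ℂ] B →ₗ[ℂ] B :=
  LinearMap.mul' ℂ B
    ∘ₗ TensorProduct.map (antipode (R := ℂ)) (antipode (R := ℂ))
    ∘ₗ (TensorProduct.comm ℂ B B).toLinearMap

/-- The 6-linear evaluation map used in the proof that the antipode is an
antihomomorphism. -/
def bigPsi : ((B ⊗[ℂ] (B ⊗[ℂ] B)) ⊗[ℂ] (B ⊗[ℂ] (B ⊗[ℂ] B))) →ₗ[ℂ] B :=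
  LinearMap.mul' ℂ B
    ∘ₗ TensorProduct.map ((antipode (R := ℂ)) ∘ₗ LinearMap.mul' ℂ B)
        (LinearMap.mul' ℂ B ∘ₗ TensorProduct.map (LinearMap.mul' ℂ B) convG)
    ∘ₗ LinearMap.lTensor (B ⊗[ℂ] B) (TensorProduct.tensorTensorTensorComm ℂ B B B B).toLinearMap
    ∘ₗ (TensorProduct.tensorTensorTensorComm ℂ B (B ⊗[ℂ] B) B (B ⊗[ℂ] B)).toLinearMap

lemma bigPsi_tmul (x1 x2 x3 y1 y2 y3 : B) :
    bigPsi ((x1 ⊗ₜ[ℂ] (x2 ⊗ₜ[ℂ] x3)) ⊗ₜ[ℂ] (y1 ⊗ₜ[ℂ] (y2 ⊗ₜ[ℂ] y3))) =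
      antipode (R := ℂ) (x1 * y1) *
        ((x2 * y2) * (antipode (R := ℂ) y3 * antipode (R := ℂ) x3)) := by
  simp [bigPsi, convG]

lemma bigPsi_comul (x1 x2 y1 y2 : B) :
    bigPsi ((x1 ⊗ₜ[ℂ] Coalgebra.comul (R := ℂ) x2) ⊗ₜ[ℂ]
        (y1 ⊗ₜ[ℂ] Coalgebra.comul (R := ℂ) y2)) =
      (Coalgebra.counit (R := ℂ) x2 * Coalgebra.counit (R := ℂ) y2) •
        antipode (R := ℂ) (x1 * y1) := by
  have rx := Coalgebra.Repr.arbitrary ℂ x2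
  have ry := Coalgebra.Repr.arbitrary ℂ y2
  rw [← rx.eq, ← ry.eq]
  simp only [tmul_sum, sum_tmul, map_sum, bigPsi_tmul]
  rw [Finset.sum_comm]
  simp_rw [← Finset.mul_sum]
  rw [claimA rx ry, mul_smul_comm, mul_one]

lemma sum_sum_smul_mul {ι κ : Type*} (s : Finset ι) (t : Finset κ)
    (c : ι → ℂ) (d : κ → ℂ) (p : ι → B) (q : κ → B) :
    ∑ i ∈ s, ∑ j ∈ t, (c i * d j) • (p i * q j)
      = (∑ i ∈ s, c i • p i) * (∑ j ∈ t, d j • q j) := by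
  rw [Finset.sum_mul_sum]
  refine Finset.sum_congr rfl fun i _ => Finset.sum_congr rfl fun j _ => ?_
  rw [smul_mul_assoc, mul_smul_comm, smul_smul]

theorem antipode_mul' (a b : B) :
    antipode (R := ℂ) (a * b) = antipode (R := ℂ) b * antipode (R := ℂ) a := by
  have ra := Coalgebra.Repr.arbitrary ℂ a
  have rb := Coalgebra.Repr.arbitrary ℂ b
  set Ta := LinearMap.lTensor B (Coalgebra.comul (R := ℂ)) (Coalgebra.comul (R := ℂ) a) with hTa
  set Tb := LinearMap.lTensor B (Coalgebra.comul (R := ℂ)) (Coalgebra.comul (R := ℂ) b) with hTb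
  -- first evaluation
  have e1a : Ta = ∑ i ∈ ra.index, ra.left i ⊗ₜ[ℂ] Coalgebra.comul (R := ℂ) (ra.right i) := by
    rw [hTa, ← ra.eq, map_sum]; simp
  have e1b : Tb = ∑ j ∈ rb.index, rb.left j ⊗ₜ[ℂ] Coalgebra.comul (R := ℂ) (rb.right j) := by
    rw [hTb, ← rb.eq, map_sum]; simp
  have E1 : bigPsi (Ta ⊗ₜ[ℂ] Tb) = antipode (R := ℂ) (a * b) := by
    rw [e1a, e1b]
    simp only [sum_tmul, tmul_sum, map_sum, bigPsi_comul]
    have hab : antipode (R := ℂ) (a * b) = ∑ i ∈ ra.index, ∑ j ∈ rb.index,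
        (Coalgebra.counit (R := ℂ) (ra.right i) * Coalgebra.counit (R := ℂ) (rb.right j)) •
          antipode (R := ℂ) (ra.left i * rb.left j) := by
      conv_lhs => rw [← sum_counit_smul_left ra, ← sum_counit_smul_left rb]
      rw [← sum_sum_smul_mul, map_sum]
      exact Finset.sum_congr rfl fun i _ => by
        rw [map_sum]
        exact Finset.sum_congr rfl fun j _ => map_smul _ _ _
    rw [hab, Finset.sum_comm]
  have E2 : bigPsi (Ta ⊗ₜ[ℂ] Tb) = antipode (R := ℂ) b * antipode (R := ℂ) a := by
    set r1 : (i : ra.ι) → Coalgebra.Repr ℂ (ra.left i) (B × B) :=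
      fun i => Coalgebra.Repr.arbitrary ℂ (ra.left i) with hr1
    set s1 : (j : rb.ι) → Coalgebra.Repr ℂ (rb.left j) (B × B) :=
      fun j => Coalgebra.Repr.arbitrary ℂ (rb.left j) with hs1
    set A3 := (TensorProduct.assoc ℂ B B B).toLinearMap with hA3
    have e2a : Ta = ∑ i ∈ ra.index, ∑ k ∈ (r1 i).index,
        (r1 i).left k ⊗ₜ[ℂ] ((r1 i).right k ⊗ₜ[ℂ] ra.right i) := by
      have h1 : (Coalgebra.comul (R := ℂ)).rTensor B (Coalgebra.comul (R := ℂ) a)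
          = ∑ i ∈ ra.index, ∑ k ∈ (r1 i).index,
            ((r1 i).left k ⊗ₜ[ℂ] (r1 i).right k) ⊗ₜ[ℂ] ra.right i := by
        rw [← ra.eq, map_sum]
        refine Finset.sum_congr rfl fun i _ => ?_
        rw [LinearMap.rTensor_tmul, ← (r1 i).eq, sum_tmul]
      have h2 : Ta = A3 ((Coalgebra.comul (R := ℂ)).rTensor B (Coalgebra.comul (R := ℂ) a)) := by
        rw [hTa, ← Coalgebra.coassoc_apply a]; rfl
      rw [h2, h1, map_sum]
      refine Finset.sum_congr rfl fun i _ => ?_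
      rw [map_sum]
      exact Finset.sum_congr rfl fun k _ => TensorProduct.assoc_tmul _ _ _
    have e2b : Tb = ∑ j ∈ rb.index, ∑ l ∈ (s1 j).index,
        (s1 j).left l ⊗ₜ[ℂ] ((s1 j).right l ⊗ₜ[ℂ] rb.right j) := by
      have h1 : (Coalgebra.comul (R := ℂ)).rTensor B (Coalgebra.comul (R := ℂ) b)
          = ∑ j ∈ rb.index, ∑ l ∈ (s1 j).index,
            ((s1 j).left l ⊗ₜ[ℂ] (s1 j).right l) ⊗ₜ[ℂ] rb.right j := by
        rw [← rb.eq, map_sum]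
        refine Finset.sum_congr rfl fun j _ => ?_
        rw [LinearMap.rTensor_tmul, ← (s1 j).eq, sum_tmul]
      have h2 : Tb = A3 ((Coalgebra.comul (R := ℂ)).rTensor B (Coalgebra.comul (R := ℂ) b)) := by
        rw [hTb, ← Coalgebra.coassoc_apply b]; rfl
      rw [h2, h1, map_sum]
      refine Finset.sum_congr rfl fun j _ => ?_
      rw [map_sum]
      exact Finset.sum_congr rfl fun l _ => TensorProduct.assoc_tmul _ _ _
    rw [e2a, e2b]
    simp only [sum_tmul, tmul_sum, map_sum, bigPsi_tmul]
    calc ∑ j ∈ rb.index, ∑ l ∈ (s1 j).index, ∑ i ∈ ra.index, ∑ k ∈ (r1 i).index,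
          antipode (R := ℂ) ((r1 i).left k * (s1 j).left l) *
            ((r1 i).right k * (s1 j).right l *
              (antipode (R := ℂ) (rb.right j) * antipode (R := ℂ) (ra.right i)))
        = ∑ j ∈ rb.index, ∑ i ∈ ra.index, ∑ l ∈ (s1 j).index, ∑ k ∈ (r1 i).index,
          antipode (R := ℂ) ((r1 i).left k * (s1 j).left l) *
            ((r1 i).right k * (s1 j).right l *
              (antipode (R := ℂ) (rb.right j) * antipode (R := ℂ) (ra.right i))) := by
          exact Finset.sum_congr rfl fun j _ => Finset.sum_comm
      _ = ∑ j ∈ rb.index, ∑ i ∈ ra.index,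
            (Coalgebra.counit (R := ℂ) (ra.left i) * Coalgebra.counit (R := ℂ) (rb.left j)) •
              (antipode (R := ℂ) (rb.right j) * antipode (R := ℂ) (ra.right i)) := by
          exact Finset.sum_congr rfl fun j _ => Finset.sum_congr rfl fun i _ =>
            claimC' (r1 i) (s1 j) _
      _ = (∑ j ∈ rb.index, Coalgebra.counit (R := ℂ) (rb.left j) • antipode (R := ℂ) (rb.right j))
            * (∑ i ∈ ra.index,
                Coalgebra.counit (R := ℂ) (ra.left i) • antipode (R := ℂ) (ra.right i)) := by
          rw [← sum_sum_smul_mul]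
          exact Finset.sum_congr rfl fun j _ => Finset.sum_congr rfl fun i _ => by
            rw [mul_comm (Coalgebra.counit (R := ℂ) (ra.left i))]
      _ = antipode (R := ℂ) b * antipode (R := ℂ) a := by
          have hb : ∑ j ∈ rb.index,
              Coalgebra.counit (R := ℂ) (rb.left j) • antipode (R := ℂ) (rb.right j)
              = antipode (R := ℂ) b := by
            calc ∑ j ∈ rb.index,
                Coalgebra.counit (R := ℂ) (rb.left j) • antipode (R := ℂ) (rb.right j)
                = antipode (R := ℂ) (∑ j ∈ rb.index,
                    Coalgebra.counit (R := ℂ) (rb.left j) • rb.right j) := by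
                  rw [map_sum]; exact Finset.sum_congr rfl fun j _ => (map_smul _ _ _).symm
              _ = antipode (R := ℂ) b := by rw [sum_counit_smul_right rb]
          have ha : ∑ i ∈ ra.index,
              Coalgebra.counit (R := ℂ) (ra.left i) • antipode (R := ℂ) (ra.right i)
              = antipode (R := ℂ) a := by
            calc ∑ i ∈ ra.index,
                Coalgebra.counit (R := ℂ) (ra.left i) • antipode (R := ℂ) (ra.right i)
                = antipode (R := ℂ) (∑ i ∈ ra.index,
                    Coalgebra.counit (R := ℂ) (ra.left i) • ra.right i) := by
                  rw [map_sum]; exact Finset.sum_congr rfl fun i _ => (map_smul _ _ _).symm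
              _ = antipode (R := ℂ) a := by rw [sum_counit_smul_right ra]
          rw [ha, hb]
  rw [← E1, E2]


/-- Build a `Coalgebra.Repr` from a `Fin`-indexed representation. -/
def finRepr {a : B} {n : ℕ} {u v : Fin n → B}
    (h : Coalgebra.comul (R := ℂ) a = ∑ i, u i ⊗ₜ[ℂ] v i) : Coalgebra.Repr ℂ a (Fin n) :=
  { index := Finset.univ, left := u, right := v, eq := h.symm }

lemma sum_mul_antipode_fin {a : B} {n : ℕ} {u v : Fin n → B}
    (h : Coalgebra.comul (R := ℂ) a = ∑ i, u i ⊗ₜ[ℂ] v i) :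
    ∑ i, u i * antipode (R := ℂ) (v i) = algebraMap ℂ B (Coalgebra.counit (R := ℂ) a) :=
  sum_mul_antipode_eq_algebraMap_counit (R := ℂ) (finRepr h)

lemma conv_apply_fin (f g : B →ₗ[ℂ] B) {a : B} {n : ℕ} {u v : Fin n → B}
    (h : Coalgebra.comul (R := ℂ) a = ∑ i, u i ⊗ₜ[ℂ] v i) :
    conv f g a = ∑ i, f (u i) * g (v i) := by
  simp only [conv, LinearMap.comp_apply, h, map_sum, TensorProduct.map_tmul,
    LinearMap.mul'_apply]

lemma exists_fin_rep (a : B) :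
    ∃ (n : ℕ) (u v : Fin n → B), Coalgebra.comul (R := ℂ) a = ∑ i, u i ⊗ₜ[ℂ] v i := by
  obtain ⟨s, h⟩ := TensorProduct.exists_finset (R := ℂ) (Coalgebra.comul (R := ℂ) a)
  refine ⟨s.card, fun i => (s.equivFin.symm i).1.1, fun i => (s.equivFin.symm i).1.2, ?_⟩
  rw [h, ← Finset.sum_coe_sort s]
  exact Fintype.sum_equiv s.equivFin _ _ (fun i => by simp)

lemma antipode_algebraMap' (c : ℂ) :
    antipode (R := ℂ) (algebraMap ℂ B c) = algebraMap ℂ B c := by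
  rw [Algebra.algebraMap_eq_smul_one, map_smul, antipode_one']

section StarPart

variable [StarRing B] [StarModule ℂ B]

/-- The `ℂ`-linear map `x ↦ (S (x^*))^*`. -/
def Tprime : B →ₗ[ℂ] B where
  toFun := fun x => star (antipode (R := ℂ) (star x))
  map_add' := fun x y => by simp [star_add]
  map_smul' := fun c x => by simp [star_smul, star_star]

lemma Tprime_apply (x : B) : Tprime x = star (antipode (R := ℂ) (star x)) := rfl

lemma star_algebraMap' (c : ℂ) :
    star (algebraMap ℂ B c) = algebraMap ℂ B (starRingEnd ℂ c) := by
  rw [Algebra.algebraMap_eq_smul_one, star_smul, star_one, Algebra.algebraMap_eq_smul_one]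
  rfl

variable (hBcomul : ∀ (x : B) (n : ℕ) (u v : Fin n → B),
      Coalgebra.comul (R := ℂ) x = ∑ i, u i ⊗ₜ[ℂ] v i →
      Coalgebra.comul (R := ℂ) (star x) = ∑ i, star (u i) ⊗ₜ[ℂ] star (v i))
    (hBcounit : ∀ x : B,
      Coalgebra.counit (R := ℂ) (star x) = starRingEnd ℂ (Coalgebra.counit (R := ℂ) x))

include hBcomul hBcounit in
lemma lemB {χ : B} {n : ℕ} {u v : Fin n → B}
    (h : Coalgebra.comul (R := ℂ) χ = ∑ i, u i ⊗ₜ[ℂ] v i) :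
    ∑ i, Tprime (v i) * u i = algebraMap ℂ B (Coalgebra.counit (R := ℂ) χ) := by
  have h2 := hBcomul χ n u v h
  have h3 := sum_mul_antipode_fin h2
  -- h3 : ∑ i ∈ univ, star (u i) * antipode (star (v i)) = algebraMap ℂ B (counit (star χ))
  calc ∑ i, Tprime (v i) * u i
      = star (∑ i : Fin n, star (u i) * antipode (R := ℂ) (star (v i))) := by
        rw [star_sum]
        exact Finset.sum_congr rfl fun i _ => by
          rw [star_mul, star_star, Tprime_apply]
    _ = star (algebraMap ℂ B (Coalgebra.counit (R := ℂ) (star χ))) := by rw [h3]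
    _ = algebraMap ℂ B (Coalgebra.counit (R := ℂ) χ) := by
        rw [hBcounit, star_algebraMap']
        simp

include hBcomul hBcounit in
lemma conv_antipode_Tprime :
    conv (antipode (R := ℂ) (A := B)) ((antipode (R := ℂ) (A := B)) ∘ₗ Tprime) = cunit := by
  apply LinearMap.ext
  intro χ
  obtain ⟨n, u, v, h⟩ := exists_fin_rep χ
  rw [conv_apply_fin _ _ h]
  have hB := lemB hBcomul hBcounit h
  have h4 := congrArg (antipode (R := ℂ)) hB
  rw [map_sum, antipode_algebraMap'] at h4
  calc ∑ i : Fin n, antipode (R := ℂ) (u i) *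
        ((antipode (R := ℂ) (A := B)) ∘ₗ Tprime) (v i)
      = ∑ i : Fin n, antipode (R := ℂ) (Tprime (v i) * u i) := by
        exact Finset.sum_congr rfl fun i _ => by
          rw [antipode_mul']; rfl
    _ = algebraMap ℂ B (Coalgebra.counit (R := ℂ) χ) := h4
    _ = cunit χ := rfl

include hBcomul hBcounit in
lemma antipode_star_antipode (ψ : B) :
    antipode (R := ℂ) (star (antipode (R := ℂ) ψ)) = star ψ := by
  have hST : (antipode (R := ℂ) (A := B)) ∘ₗ Tprime = LinearMap.id := by
    calc (antipode (R := ℂ) (A := B)) ∘ₗ Tprime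
        = conv cunit ((antipode (R := ℂ) (A := B)) ∘ₗ Tprime) := (conv_cunit_left _).symm
      _ = conv (conv LinearMap.id (antipode (R := ℂ)))
            ((antipode (R := ℂ) (A := B)) ∘ₗ Tprime) := by rw [conv_id_antipode]
      _ = conv LinearMap.id
            (conv (antipode (R := ℂ)) ((antipode (R := ℂ) (A := B)) ∘ₗ Tprime)) :=
          conv_assoc _ _ _
      _ = conv LinearMap.id cunit := by rw [conv_antipode_Tprime hBcomul hBcounit]
      _ = LinearMap.id := conv_cunit_right _
  have := LinearMap.congr_fun hST (star ψ)
  simpa [Tprime_apply, star_star] using this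

end StarPart

end HopfStarAux

open HopfStarAux in
lemma actM_fin (p : U →ₗ[ℂ] Module.Dual ℂ A) (x : U) {φ : A} {n : ℕ} {u v : Fin n → A}
    (h : Coalgebra.comul (R := ℂ) φ = ∑ i, u i ⊗ₜ[ℂ] v i) :
    actM p (x ⊗ₜ[ℂ] φ) = ∑ i, p x (v i) • u i := by
  have e1 : (LinearMap.lTensor U (Coalgebra.comul (R := ℂ))) (x ⊗ₜ[ℂ] φ)
      = ∑ i, x ⊗ₜ[ℂ] (u i ⊗ₜ[ℂ] v i) := by rw [LinearMap.lTensor_tmul, h, tmul_sum]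
  show (TensorProduct.rid ℂ A).toLinearMap
      ((LinearMap.lTensor A (TensorProduct.lift p))
        ((TensorProduct.leftComm ℂ U A A).toLinearMap
          ((LinearMap.lTensor U (Coalgebra.comul (R := ℂ))) (x ⊗ₜ[ℂ] φ)))) = _
  rw [e1, map_sum, map_sum, map_sum]
  exact Finset.sum_congr rfl fun i _ => by
    simp only [LinearEquiv.coe_coe, TensorProduct.leftComm_tmul, LinearMap.lTensor_tmul,
      TensorProduct.lift.tmul, TensorProduct.rid_tmul]

/-- for a duality pairing of Hopf ∗-algebras and a left ideal `𝒥 ⊆ U` with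
`S(𝒥)^∗ ⊆ 𝒥`, the invariant subspace `A^𝒥` is closed under the ∗-operation.

The Hopf ∗-algebra compatibilities `Δ(x^∗) = (∗⊗∗)(Δ(x))` and `ε(x^∗) = conj (ε x)` are
stated in Sweedler form (the former quantified over all finite-sum representations of
`Δ(x)`); the conjugate-linear antiautomorphism properties of `∗` are part of the
`StarRing`/`StarModule` assumptions. -/
theorem invariants_star_closed (p : U →ₗ[ℂ] Module.Dual ℂ A)
    (hUcomul : ∀ (x : U) (n : ℕ) (u v : Fin n → U),
      Coalgebra.comul (R := ℂ) x = ∑ i, u i ⊗ₜ[ℂ] v i →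
      Coalgebra.comul (R := ℂ) (star x) = ∑ i, star (u i) ⊗ₜ[ℂ] star (v i))
    (hUcounit : ∀ x : U,
      Coalgebra.counit (R := ℂ) (star x) = starRingEnd ℂ (Coalgebra.counit (R := ℂ) x))
    (hAcomul : ∀ (φ : A) (n : ℕ) (u v : Fin n → A),
      Coalgebra.comul (R := ℂ) φ = ∑ i, u i ⊗ₜ[ℂ] v i →
      Coalgebra.comul (R := ℂ) (star φ) = ∑ i, star (u i) ⊗ₜ[ℂ] star (v i))
    (hAcounit : ∀ φ : A,
      Coalgebra.counit (R := ℂ) (star φ) = starRingEnd ℂ (Coalgebra.counit (R := ℂ) φ))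
    (hmulU : ∀ (a b : U) (φ : A),
      p (a * b) φ = pairTensor p (a ⊗ₜ b) (Coalgebra.comul (R := ℂ) φ))
    (honeU : ∀ φ : A, p 1 φ = Coalgebra.counit (R := ℂ) φ)
    (hmulA : ∀ (a : U) (φ ψ : A),
      p a (φ * ψ) = pairTensor p (Coalgebra.comul (R := ℂ) a) (φ ⊗ₜ ψ))
    (honeA : ∀ a : U, p a 1 = Coalgebra.counit (R := ℂ) a)
    (hantipode : ∀ (a : U) (φ : A),
      p (HopfAlgebra.antipode (R := ℂ) a) φ = p a (HopfAlgebra.antipode (R := ℂ) φ))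
    (hpstar : ∀ (a : U) (φ : A),
      p (star a) φ = starRingEnd ℂ (p a (star (HopfAlgebra.antipode (R := ℂ) φ))))
    (J : Submodule ℂ U) (hJ : ∀ u : U, ∀ x ∈ J, u * x ∈ J)
    (hJstar : ∀ x ∈ J, star (HopfAlgebra.antipode (R := ℂ) x) ∈ J) :
    ∀ φ : A, (∀ x ∈ J, actM p (x ⊗ₜ φ) = 0) → ∀ x ∈ J, actM p (x ⊗ₜ star φ) = 0 := by
  intro φ hφ x hx
  obtain ⟨n, u, v, h⟩ := HopfStarAux.exists_fin_rep φ
  have h2 := hAcomul φ n u v h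
  have hy := hJstar x hx
  have h0 := hφ _ hy
  rw [actM_fin p _ h] at h0
  rw [actM_fin p _ h2]
  have key : ∀ i : Fin n, p x (star (v i)) =
      starRingEnd ℂ (p (star (HopfAlgebra.antipode (R := ℂ) x)) (v i)) := by
    intro i
    have h5 := hpstar (HopfAlgebra.antipode (R := ℂ) x) (v i)
    rw [hantipode x] at h5
    rw [HopfStarAux.antipode_star_antipode hAcomul hAcounit (v i)] at h5
    rw [h5]
    simp
  calc ∑ i, p x (star (v i)) • star (u i)
      = ∑ i : Fin n, starRingEnd ℂ
          (p (star (HopfAlgebra.antipode (R := ℂ) x)) (v i)) • star (u i) := by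
        exact Finset.sum_congr rfl fun i _ => by rw [key i]
    _ = star (∑ i : Fin n, p (star (HopfAlgebra.antipode (R := ℂ) x)) (v i) • u i) := by
        rw [star_sum]
        exact Finset.sum_congr rfl fun i _ => by
          rw [star_smul, starRingEnd_apply]
    _ = star 0 := by rw [h0]
    _ = 0 := star_zero _
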